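/- Fix integers 0 < t < k ≤ n, let V ⊂ ℝ^{binom(n,t)} be the set of columns of 𝒜_{n,k,t} (each column being the 0/1 indicator vector of the t-subsets contained in a given k-subset), and let 𝒫_{n,k,t} = convexHull ℝ V. Then 𝒫_{n,k,t} is (2^t − 1)-neighborly: for every subset S ⊆ V with |S| ≤ 2^t − 1, the convex hull convexHull ℝ S is a face of 𝒫_{n,k,t}, i.e., convexHull ℝ S is an extreme subset of 𝒫_{n,k,t} (IsExtreme ℝ 𝒫_{n,k,t} (convexHull ℝ S)). -/

import Mathlib

/-- The incidence matrix `𝒜_{n,k,t}`. -/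
def incMat (R : Type*) [Zero R] [One R] (n k t : ℕ) :
    Matrix {T : Finset (Fin n) // T.card = t} {K : Finset (Fin n) // K.card = k} R :=
  fun T K => if T.1 ⊆ K.1 then 1 else 0

open Finset

section Uncertainty

variable {α : Type*} [DecidableEq α]

lemma exists_pos_neg_of_sum_zero {β : Type*} (s : Finset β) (f : β → ℝ)
    (h0 : ∑ A ∈ s, f A = 0) (A₀ : β) (hA₀ : A₀ ∈ s) (hfA₀ : f A₀ ≠ 0) :
    (∃ A ∈ s, 0 < f A) ∧ (∃ A ∈ s, f A < 0) := by
  constructor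
  · by_contra hcon
    push_neg at hcon
    have hlt : ∑ A ∈ s, f A < ∑ A ∈ s, (0:ℝ) :=
      Finset.sum_lt_sum hcon ⟨A₀, hA₀, lt_of_le_of_ne (hcon A₀ hA₀) hfA₀⟩
    simp [h0] at hlt
  · by_contra hcon
    push_neg at hcon
    have hlt : ∑ A ∈ s, (0:ℝ) < ∑ A ∈ s, f A :=
      Finset.sum_lt_sum hcon ⟨A₀, hA₀, lt_of_le_of_ne (hcon A₀ hA₀) (Ne.symm hfA₀)⟩
    simp [h0] at hlt

lemma sum_powerset_insert_filter {M : Type*} [AddCommMonoid M] {x : α} {s : Finset α}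
    (hx : x ∉ s) (p : Finset α → Prop) [DecidablePred p] (f : Finset α → M) :
    ∑ A ∈ (insert x s).powerset.filter p, f A
      = ∑ A ∈ s.powerset.filter p, f A
        + ∑ A ∈ s.powerset.filter (fun A => p (insert x A)), f (insert x A) := by
  have hdisj : Disjoint (s.powerset.filter p) ((Finset.image (insert x) s.powerset).filter p) := by
    apply Finset.disjoint_filter_filter
    rw [Finset.disjoint_left]
    intro A hA hA'
    obtain ⟨B, _, rfl⟩ := Finset.mem_image.mp hA'
    exact hx (Finset.mem_powerset.mp hA (Finset.mem_insert_self x B))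
  rw [Finset.powerset_insert, Finset.filter_union, Finset.sum_union hdisj,
    Finset.filter_image, Finset.sum_image]
  intro A hA B hB hAB
  have hxA : x ∉ A := fun h => hx (Finset.mem_powerset.mp (Finset.mem_filter.mp hA).1 h)
  have hxB : x ∉ B := fun h => hx (Finset.mem_powerset.mp (Finset.mem_filter.mp hB).1 h)
  rw [← Finset.erase_insert hxA, hAB, Finset.erase_insert hxB]

lemma card_powerset_insert_filter {x : α} {s : Finset α}
    (hx : x ∉ s) (p : Finset α → Prop) [DecidablePred p] :
    ((insert x s).powerset.filter p).card
      = (s.powerset.filter p).card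
        + (s.powerset.filter (fun A => p (insert x A))).card := by
  have := sum_powerset_insert_filter (M := ℕ) hx p (fun _ => 1)
  simpa using this


lemma uncert_zero (Ω : Finset α) (f : Finset α → ℝ)
    (hmom : ∑ A ∈ Ω.powerset, f A = 0)
    (hne : ∃ A ∈ Ω.powerset, f A ≠ 0) :
    1 ≤ (Ω.powerset.filter fun A => 0 < f A).card ∧
      1 ≤ (Ω.powerset.filter fun A => f A < 0).card := by
  obtain ⟨A₀, hA₀, hfA₀⟩ := hne
  obtain ⟨⟨A, hA, hApos⟩, ⟨B, hB, hBneg⟩⟩ :=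
    exists_pos_neg_of_sum_zero Ω.powerset f hmom A₀ hA₀ hfA₀
  constructor
  · exact Finset.card_pos.mpr ⟨A, Finset.mem_filter.mpr ⟨hA, hApos⟩⟩
  · exact Finset.card_pos.mpr ⟨B, Finset.mem_filter.mpr ⟨hB, hBneg⟩⟩

lemma uncert (Ω : Finset α) : ∀ (t : ℕ) (f : Finset α → ℝ),
    (∀ T ∈ Ω.powerset, T.card ≤ t →
      ∑ A ∈ Ω.powerset.filter (fun A => T ⊆ A), f A = 0) →
    (∃ A ∈ Ω.powerset, f A ≠ 0) →
    2 ^ t ≤ (Ω.powerset.filter fun A => 0 < f A).card ∧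
      2 ^ t ≤ (Ω.powerset.filter fun A => f A < 0).card := by
  induction Ω using Finset.induction_on with
  | empty =>
    intro t f hmom hne
    exfalso
    obtain ⟨A, hA, hfA⟩ := hne
    have hA' : A = ∅ := by simpa using Finset.mem_powerset.mp hA
    have h0 := hmom ∅ (Finset.empty_mem_powerset _) (by simp)
    simp [Finset.powerset_empty] at h0
    exact hfA (hA' ▸ h0)
  | @insert x s hx ih =>
    intro t f hmom hne
    have hmom_all : ∑ A ∈ (insert x s).powerset, f A = 0 := by
      have := hmom ∅ (Finset.empty_mem_powerset _) (Nat.zero_le _)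
      rwa [Finset.filter_true_of_mem (fun A _ => Finset.empty_subset A)] at this
    match t with
    | 0 =>
      simpa using uncert_zero (insert x s) f hmom_all hne
    | (r+1) =>
      set g : Finset α → ℝ := fun A => f A + f (insert x A) with hg
      set h : Finset α → ℝ := fun A => f (insert x A) with hh
      -- moments for g
      have hmomg : ∀ T ∈ s.powerset, T.card ≤ r + 1 →
          ∑ A ∈ s.powerset.filter (fun A => T ⊆ A), g A = 0 := by
        intro T hT hTc
        have hxT : x ∉ T := fun hmem => hx (Finset.mem_powerset.mp hT hmem)
        have hiff : ∀ A, T ⊆ insert x A ↔ T ⊆ A := by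
          intro A
          constructor
          · intro hsub e he
            rcases Finset.mem_insert.mp (hsub he) with rfl | h'
            · exact absurd he hxT
            · exact h'
          · exact fun hsub => hsub.trans (Finset.subset_insert x A)
        have := hmom T (Finset.mem_powerset.mpr ((Finset.mem_powerset.mp hT).trans (Finset.subset_insert x s))) hTc
        rw [sum_powerset_insert_filter hx (fun A => T ⊆ A) f] at this
        simp only [hiff] at this
        simpa [hg, Finset.sum_add_distrib] using this
      -- moments for h
      have hmomh : ∀ T ∈ s.powerset, T.card ≤ r →
          ∑ A ∈ s.powerset.filter (fun A => T ⊆ A), h A = 0 := by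
        intro T hT hTc
        have hTs := Finset.mem_powerset.mp hT
        have hxT : x ∉ T := fun hmem => hx (hTs hmem)
        have hmem : insert x T ∈ (insert x s).powerset :=
          Finset.mem_powerset.mpr (Finset.insert_subset_insert x hTs)
        have hcard : (insert x T).card ≤ r + 1 := by
          rw [Finset.card_insert_of_notMem hxT]; omega
        have := hmom (insert x T) hmem hcard
        rw [sum_powerset_insert_filter hx (fun A => insert x T ⊆ A) f] at this
        have h1 : s.powerset.filter (fun A => insert x T ⊆ A) = ∅ := by
          apply Finset.filter_eq_empty_iff.mpr
          intro A hA hsub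
          exact hx (Finset.mem_powerset.mp hA (hsub (Finset.mem_insert_self x T)))
        have h2 : ∀ A ∈ s.powerset, (insert x T ⊆ insert x A) ↔ T ⊆ A := by
          intro A hA
          have hxA : x ∉ A := fun hmem => hx (Finset.mem_powerset.mp hA hmem)
          rw [Finset.insert_subset_iff]
          constructor
          · rintro ⟨-, hsub⟩ e he
            rcases Finset.mem_insert.mp (hsub he) with rfl | h'
            · exact absurd he hxT
            · exact h'
          · intro hsub
            exact ⟨Finset.mem_insert_self x A, hsub.trans (Finset.subset_insert x A)⟩
        rw [h1, Finset.sum_empty, zero_add, Finset.filter_congr h2] at this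
        exact this
      have hsplit_pos := card_powerset_insert_filter hx (fun A => 0 < f A)
      have hsplit_neg := card_powerset_insert_filter hx (fun A => f A < 0)
      by_cases hH : ∀ A ∈ s.powerset, h A = 0
      · have hne' : ∃ A ∈ s.powerset, g A ≠ 0 := by
          obtain ⟨A, hA, hfA⟩ := hne
          rw [Finset.powerset_insert, Finset.mem_union] at hA
          rcases hA with hA' | hA'
          · refine ⟨A, hA', ?_⟩
            have := hH A hA'
            simp only [hg, hh] at this ⊢
            rw [this, add_zero]
            exact hfA
          · obtain ⟨B, hB, rfl⟩ := Finset.mem_image.mp hA'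
            exact absurd (hH B hB) hfA
        obtain ⟨hp, hn⟩ := ih (r+1) g hmomg hne'
        have hgf : ∀ A ∈ s.powerset, g A = f A := by
          intro A hA
          simp only [hg]
          rw [show f (insert x A) = h A from rfl, hH A hA, add_zero]
        constructor
        · rw [hsplit_pos]
          have e1 : s.powerset.filter (fun A => 0 < g A)
              = s.powerset.filter (fun A => 0 < f A) :=
            Finset.filter_congr (fun A hA => by rw [hgf A hA])
          rw [e1] at hp
          omega
        · rw [hsplit_neg]
          have e1 : s.powerset.filter (fun A => g A < 0)
              = s.powerset.filter (fun A => f A < 0) :=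
            Finset.filter_congr (fun A hA => by rw [hgf A hA])
          rw [e1] at hn
          omega
      · push_neg at hH
        obtain ⟨B, hB, hhB⟩ := hH
        obtain ⟨hp1, hn1⟩ := ih r h hmomh ⟨B, hB, hhB⟩
        have hpos_h : s.powerset.filter (fun A => 0 < f (insert x A))
            = s.powerset.filter (fun A => 0 < h A) := rfl
        have hneg_h : s.powerset.filter (fun A => f (insert x A) < 0)
            = s.powerset.filter (fun A => h A < 0) := rfl
        by_cases hG : ∀ A ∈ s.powerset, g A = 0
        · have hfeq : ∀ A ∈ s.powerset, f A = - h A := by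
            intro A hA
            have := hG A hA
            simp only [hg, hh] at this ⊢
            linarith
          constructor
          · rw [hsplit_pos, hpos_h]
            have e1 : s.powerset.filter (fun A => 0 < f A)
                = s.powerset.filter (fun A => h A < 0) :=
              Finset.filter_congr (fun A hA => by rw [hfeq A hA]; exact neg_pos)
            rw [e1]
            have : 2^r + 2^r ≤ (s.powerset.filter (fun A => h A < 0)).card
                + (s.powerset.filter (fun A => 0 < h A)).card := add_le_add hn1 hp1
            calc (2:ℕ)^(r+1) = 2^r + 2^r := by ring
              _ ≤ _ := this
          · rw [hsplit_neg, hneg_h]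
            have e1 : s.powerset.filter (fun A => f A < 0)
                = s.powerset.filter (fun A => 0 < h A) :=
              Finset.filter_congr (fun A hA => by rw [hfeq A hA]; exact neg_neg_iff_pos)
            rw [e1]
            have : 2^r + 2^r ≤ (s.powerset.filter (fun A => 0 < h A)).card
                + (s.powerset.filter (fun A => h A < 0)).card := add_le_add hp1 hn1
            calc (2:ℕ)^(r+1) = 2^r + 2^r := by ring
              _ ≤ _ := this
        · push_neg at hG
          obtain ⟨C, hC, hgC⟩ := hG
          obtain ⟨hp2, hn2⟩ := ih (r+1) g hmomg ⟨C, hC, hgC⟩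
          constructor
          · rw [hsplit_pos, hpos_h]
            have hsub : s.powerset.filter (fun A => 0 < g A) ⊆
                s.powerset.filter (fun A => 0 < f A) ∪ s.powerset.filter (fun A => 0 < h A) := by
              intro A hA
              rw [Finset.mem_filter] at hA
              rw [Finset.mem_union, Finset.mem_filter, Finset.mem_filter]
              have hgA : 0 < f A + h A := hA.2
              rcases lt_or_ge 0 (f A) with hlt | hle
              · exact Or.inl ⟨hA.1, hlt⟩
              · exact Or.inr ⟨hA.1, by linarith⟩
            calc (2:ℕ)^(r+1) ≤ (s.powerset.filter (fun A => 0 < g A)).card := hp2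
              _ ≤ (s.powerset.filter (fun A => 0 < f A)
                    ∪ s.powerset.filter (fun A => 0 < h A)).card := Finset.card_le_card hsub
              _ ≤ _ := Finset.card_union_le _ _
          · rw [hsplit_neg, hneg_h]
            have hsub : s.powerset.filter (fun A => g A < 0) ⊆
                s.powerset.filter (fun A => f A < 0) ∪ s.powerset.filter (fun A => h A < 0) := by
              intro A hA
              rw [Finset.mem_filter] at hA
              rw [Finset.mem_union, Finset.mem_filter, Finset.mem_filter]
              have hgA : f A + h A < 0 := hA.2
              rcases lt_or_ge (f A) 0 with hlt | hle
              · exact Or.inl ⟨hA.1, hlt⟩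
              · exact Or.inr ⟨hA.1, by linarith⟩
            calc (2:ℕ)^(r+1) ≤ (s.powerset.filter (fun A => g A < 0)).card := hn2
              _ ≤ (s.powerset.filter (fun A => f A < 0)
                    ∪ s.powerset.filter (fun A => h A < 0)).card := Finset.card_le_card hsub
              _ ≤ _ := Finset.card_union_le _ _

end Uncertainty

lemma col_injective (n k t : ℕ) (ht : 0 < t) (htk : t ≤ k) :
    Function.Injective (fun (K : {K : Finset (Fin n) // K.card = k}) =>
      (fun T : {T : Finset (Fin n) // T.card = t} => incMat ℝ n k t T K)) := by
  have key : ∀ (A B : {K : Finset (Fin n) // K.card = k}),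
      (fun T : {T : Finset (Fin n) // T.card = t} => incMat ℝ n k t T A)
        = (fun T => incMat ℝ n k t T B) → A.1 ⊆ B.1 := by
    intro A B hAB i hi
    have h1 : t - 1 ≤ (A.1.erase i).card := by
      rw [Finset.card_erase_of_mem hi, A.2]; omega
    obtain ⟨T', hT'sub, hT'card⟩ := Finset.exists_subset_card_eq h1
    have hiT' : i ∉ T' := fun hmem => (Finset.mem_erase.mp (hT'sub hmem)).1 rfl
    have hTcard : (insert i T').card = t := by
      rw [Finset.card_insert_of_notMem hiT', hT'card]; omega
    have hTsubA : insert i T' ⊆ A.1 :=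
      Finset.insert_subset hi (hT'sub.trans (Finset.erase_subset i A.1))
    have heq := congrFun hAB ⟨insert i T', hTcard⟩
    simp only [incMat, if_pos hTsubA] at heq
    have hsubB : insert i T' ⊆ B.1 := by
      by_contra hns
      rw [if_neg hns] at heq
      exact one_ne_zero heq
    exact hsubB (Finset.mem_insert_self i T')
  intro K K' hKK
  exact Subtype.ext (Finset.Subset.antisymm (key K K' hKK) (key K' K hKK.symm))

lemma mem_convexHull_image_iff {ι E : Type*} [Fintype ι] [AddCommGroup E] [Module ℝ E]
    (v : ι → E) (I : Finset ι) (x : E) :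
    x ∈ convexHull ℝ (v '' ↑I) ↔
      ∃ w : ι → ℝ, (∀ i, 0 ≤ w i) ∧ (∀ i ∉ I, w i = 0) ∧
        (∑ i, w i) = 1 ∧ (∑ i, w i • v i) = x := by
  classical
  constructor
  · intro hx
    have main : convexHull ℝ (v '' ↑I) ⊆ {y | ∃ w : ι → ℝ, (∀ i, 0 ≤ w i) ∧ (∀ i ∉ I, w i = 0) ∧
        (∑ i, w i) = 1 ∧ (∑ i, w i • v i) = y} := by
      refine convexHull_min ?_ ?_
      · rintro y ⟨i, hi, rfl⟩
        rw [Finset.mem_coe] at hi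
        refine ⟨fun j => if j = i then 1 else 0, fun j => by positivity,
          fun j hj => if_neg (fun hji : j = i => hj (by rw [hji]; exact hi)), by simp, by simp⟩
      · rintro p ⟨wp, hwp0, hwpI, hwp1, hwpx⟩ q ⟨wq, hwq0, hwqI, hwq1, hwqx⟩ a b ha hb hab
        refine ⟨fun i => a * wp i + b * wq i,
          fun i => add_nonneg (mul_nonneg ha (hwp0 i)) (mul_nonneg hb (hwq0 i)),
          fun i hi => by show a * wp i + b * wq i = 0; rw [hwpI i hi, hwqI i hi, mul_zero, mul_zero, add_zero],
          ?_, ?_⟩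
        · rw [Finset.sum_add_distrib, ← Finset.mul_sum, ← Finset.mul_sum, hwp1, hwq1,
            mul_one, mul_one, hab]
        · have hsm : ∀ i, (a * wp i + b * wq i) • v i
              = a • (wp i • v i) + b • (wq i • v i) := by
            intro i
            rw [add_smul, mul_smul, mul_smul]
          simp only [hsm]
          rw [Finset.sum_add_distrib, ← Finset.smul_sum, ← Finset.smul_sum, hwpx, hwqx]
    exact main hx
  · rintro ⟨w, hw0, hwI, hw1, hwx⟩
    have hsumI : ∑ i ∈ I, w i = 1 := by
      rw [← hw1]
      exact Finset.sum_subset (Finset.subset_univ I) (fun i _ hi => hwI i hi)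
    have hsumvI : ∑ i ∈ I, w i • v i = x := by
      rw [← hwx]
      exact Finset.sum_subset (Finset.subset_univ I)
        (fun i _ hi => by rw [hwI i hi, zero_smul])
    have hcm : I.centerMass w v = x := by
      rw [Finset.centerMass_eq_of_sum_1 _ _ hsumI, hsumvI]
    rw [← hcm]
    exact Finset.centerMass_mem_convexHull I (fun i _ => hw0 i) (by rw [hsumI]; norm_num)
      (fun i hi => Set.mem_image_of_mem v (Finset.mem_coe.mpr hi))

lemma count_middle (n k t : ℕ) (htk : t ≤ k) (T : Finset (Fin n)) (htT : T.card ≤ t)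
    (K : Finset (Fin n)) (hK : K.card = k) (hTK : T ⊆ K) :
    ((Finset.univ : Finset {T' : Finset (Fin n) // T'.card = t}).filter
        (fun T'' => T ⊆ T''.1 ∧ T''.1 ⊆ K)).card
      = (k - T.card).choose (t - T.card) := by
  classical
  have hcs : (K \ T).card = k - T.card := by rw [Finset.card_sdiff_of_subset hTK, hK]
  rw [← hcs, ← Finset.card_powersetCard]
  apply Finset.card_bij' (fun T'' _ => T''.1 \ T)
    (fun A hA => (⟨A ∪ T, by
      rw [Finset.card_union_of_disjoint, (Finset.mem_powersetCard.mp hA).2]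
      · omega
      · exact Finset.disjoint_left.mpr
          (fun a haA haT => (Finset.mem_sdiff.mp ((Finset.mem_powersetCard.mp hA).1 haA)).2 haT)⟩ :
      {T' : Finset (Fin n) // T'.card = t}))
  · intro A hA
    rw [Finset.mem_filter]
    rw [Finset.mem_powersetCard] at hA
    refine ⟨Finset.mem_univ _, Finset.subset_union_right, ?_⟩
    exact Finset.union_subset ((hA.1).trans (Finset.sdiff_subset)) hTK
  · intro A hA
    rw [Finset.mem_filter] at hA
    apply Subtype.ext
    simp only
    rw [Finset.sdiff_union_self_eq_union]
    exact Finset.union_eq_left.mpr hA.2.1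
  · intro T'' hT''
    rw [Finset.mem_powersetCard] at hT''
    simp only
    rw [Finset.union_sdiff_right]
    exact Finset.sdiff_eq_self_of_disjoint
      (Finset.disjoint_left.mpr (fun a haA haT => (Finset.mem_sdiff.mp (hT''.1 haA)).2 haT))
  · intro T'' hT''
    rw [Finset.mem_filter] at hT''
    rw [Finset.mem_powersetCard]
    constructor
    · intro e he
      rw [Finset.mem_sdiff] at he ⊢
      exact ⟨hT''.2.2 he.1, he.2⟩
    · rw [Finset.card_sdiff_of_subset hT''.2.1, T''.2]

lemma moments_low (n k t : ℕ) (htk : t ≤ k)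
    (d : {K : Finset (Fin n) // K.card = k} → ℝ)
    (H : ∀ T'' : {T' : Finset (Fin n) // T'.card = t},
      (∑ K : {K : Finset (Fin n) // K.card = k}, d K * (if T''.1 ⊆ K.1 then 1 else 0)) = 0)
    (T : Finset (Fin n)) (hT : T.card ≤ t) :
    ∑ K ∈ Finset.univ.filter (fun K : {K : Finset (Fin n) // K.card = k} => T ⊆ K.1), d K = 0 := by
  classical
  have hdouble :
      (∑ T'' ∈ Finset.univ.filter (fun T'' : {T' : Finset (Fin n) // T'.card = t} => T ⊆ T''.1),
        ∑ K : {K : Finset (Fin n) // K.card = k}, d K * (if T''.1 ⊆ K.1 then 1 else 0)) = 0 :=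
    Finset.sum_eq_zero (fun T'' _ => H T'')
  rw [Finset.sum_comm] at hdouble
  have hinner : ∀ K : {K : Finset (Fin n) // K.card = k},
      (∑ T'' ∈ Finset.univ.filter (fun T'' : {T' : Finset (Fin n) // T'.card = t} => T ⊆ T''.1),
        d K * (if T''.1 ⊆ K.1 then 1 else 0))
      = d K * (if T ⊆ K.1 then ((k - T.card).choose (t - T.card) : ℝ) else 0) := by
    intro K
    rw [← Finset.mul_sum]
    congr 1
    rw [Finset.sum_boole, Finset.filter_filter]
    by_cases hTK : T ⊆ K.1
    · rw [if_pos hTK, count_middle n k t htk T hT K.1 K.2 hTK]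
    · rw [if_neg hTK]
      have : (Finset.univ.filter
          (fun T'' : {T' : Finset (Fin n) // T'.card = t} => T ⊆ T''.1 ∧ T''.1 ⊆ K.1)) = ∅ := by
        apply Finset.filter_eq_empty_iff.mpr
        intro T'' _ h
        exact hTK (h.1.trans h.2)
      rw [this]
      simp
  rw [Finset.sum_congr rfl (fun K _ => hinner K)] at hdouble
  have hrw : (∑ K : {K : Finset (Fin n) // K.card = k},
      d K * (if T ⊆ K.1 then ((k - T.card).choose (t - T.card) : ℝ) else 0))
      = (∑ K ∈ Finset.univ.filter
          (fun K : {K : Finset (Fin n) // K.card = k} => T ⊆ K.1), d K)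
        * ((k - T.card).choose (t - T.card) : ℝ) := by
    rw [Finset.sum_mul, Finset.sum_filter]
    apply Finset.sum_congr rfl
    intro K _
    by_cases hTK : T ⊆ K.1
    · rw [if_pos hTK, if_pos hTK]
    · rw [if_neg hTK, if_neg hTK, mul_zero]
  rw [hrw] at hdouble
  have hCpos : (0:ℝ) < ((k - T.card).choose (t - T.card) : ℝ) := by
    have : 0 < (k - T.card).choose (t - T.card) := Nat.choose_pos (by omega)
    exact_mod_cast this
  exact (mul_eq_zero.mp hdouble).resolve_right (ne_of_gt hCpos)

lemma unique_weights (n k t : ℕ) (ht : 0 < t) (htk : t < k)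
    (S : Finset ({T : Finset (Fin n) // T.card = t} → ℝ))
    (hcard : S.card ≤ 2 ^ t - 1)
    (u w : {K : Finset (Fin n) // K.card = k} → ℝ)
    (hu0 : ∀ K, 0 ≤ u K) (hw0 : ∀ K, 0 ≤ w K)
    (huS : ∀ K, (fun T => incMat ℝ n k t T K) ∉ (S : Set _) → u K = 0)
    (heq : (∑ K, u K • (fun T => incMat ℝ n k t T K))
      = ∑ K, w K • (fun T => incMat ℝ n k t T K)) :
    ∀ K, w K = u K := by
  classical
  set d : {K : Finset (Fin n) // K.card = k} → ℝ := fun K => u K - w K with hd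
  have H : ∀ T'' : {T' : Finset (Fin n) // T'.card = t},
      (∑ K : {K : Finset (Fin n) // K.card = k}, d K * (if T''.1 ⊆ K.1 then 1 else 0)) = 0 := by
    intro T''
    have hcoord := congrFun heq T''
    rw [Finset.sum_apply, Finset.sum_apply] at hcoord
    simp only [Pi.smul_apply, smul_eq_mul, incMat] at hcoord
    have hexp : (∑ K : {K : Finset (Fin n) // K.card = k},
          d K * (if T''.1 ⊆ K.1 then 1 else 0))
        = (∑ K : {K : Finset (Fin n) // K.card = k}, u K * (if T''.1 ⊆ K.1 then 1 else 0))
          - (∑ K : {K : Finset (Fin n) // K.card = k}, w K * (if T''.1 ⊆ K.1 then 1 else 0)) := by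
      rw [← Finset.sum_sub_distrib]
      apply Finset.sum_congr rfl
      intro K _
      simp only [hd]
      ring
    rw [hexp, sub_eq_zero]
    exact hcoord
  have Hlow := moments_low n k t (le_of_lt htk) d H
  set ν : Finset (Fin n) → ℝ := fun A => if h : A.card = k then d ⟨A, h⟩ else 0 with hν
  have bridge : ∀ T : Finset (Fin n),
      (∑ A ∈ (Finset.univ : Finset (Fin n)).powerset.filter (fun A => T ⊆ A), ν A)
      = ∑ K ∈ Finset.univ.filter
          (fun K : {K : Finset (Fin n) // K.card = k} => T ⊆ K.1), d K := by
    intro T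
    rw [Finset.powerset_univ, Finset.sum_filter, Finset.sum_filter]
    have h1 : (∑ A : Finset (Fin n), if T ⊆ A then ν A else 0)
        = ∑ A ∈ Finset.univ.filter (fun A : Finset (Fin n) => A.card = k),
            (if T ⊆ A then ν A else 0) := by
      symm
      apply Finset.sum_filter_of_ne
      intro A _ hne
      by_contra hcon
      apply hne
      have : ν A = 0 := by rw [hν]; exact dif_neg hcon
      rw [this]
      simp
    have h2 := Finset.sum_subtype (p := fun A : Finset (Fin n) => A.card = k) (F := inferInstance)
      (Finset.univ.filter (fun A : Finset (Fin n) => A.card = k))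
      (fun A => by simp) (fun A => if T ⊆ A then ν A else 0)
    rw [h1, h2]
    apply Finset.sum_congr rfl
    intro K _
    by_cases hTK : T ⊆ K.1
    · rw [if_pos hTK, if_pos hTK, hν]
      simp only
      rw [dif_pos K.2]
    · rw [if_neg hTK, if_neg hTK]
  by_contra hcon
  push_neg at hcon
  obtain ⟨K₀, hK₀⟩ := hcon
  have hdK₀ : d K₀ ≠ 0 := sub_ne_zero.mpr (fun h => hK₀ h.symm)
  have hνK₀ : ν K₀.1 ≠ 0 := by
    rw [hν]
    simp only
    rw [dif_pos K₀.2]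
    simpa using hdK₀
  have hne : ∃ A ∈ (Finset.univ : Finset (Fin n)).powerset, ν A ≠ 0 :=
    ⟨K₀.1, Finset.mem_powerset.mpr (Finset.subset_univ _), hνK₀⟩
  have hmom : ∀ T ∈ (Finset.univ : Finset (Fin n)).powerset, T.card ≤ t →
      ∑ A ∈ (Finset.univ : Finset (Fin n)).powerset.filter (fun A => T ⊆ A), ν A = 0 := by
    intro T _ hTc
    rw [bridge T]
    exact Hlow T hTc
  obtain ⟨hpos, -⟩ := uncert (Finset.univ : Finset (Fin n)) t ν hmom hne
  -- bound positive count by |S|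
  have hmap : ∀ A ∈ ((Finset.univ : Finset (Fin n)).powerset.filter fun A => 0 < ν A),
      (fun T : {T' : Finset (Fin n) // T'.card = t} => (if T.1 ⊆ A then (1:ℝ) else 0)) ∈ S := by
    intro A hA
    rw [Finset.mem_filter] at hA
    have hAk : A.card = k := by
      by_contra hAk
      rw [hν] at hA
      simp only at hA
      rw [dif_neg hAk] at hA
      exact lt_irrefl 0 hA.2
    have hdA : 0 < d ⟨A, hAk⟩ := by
      have := hA.2
      rw [hν] at this
      simp only at this
      rwa [dif_pos hAk] at this
    have huA : u ⟨A, hAk⟩ ≠ 0 := by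
      have := hw0 ⟨A, hAk⟩
      rw [hd] at hdA
      simp only at hdA
      intro h0
      rw [h0] at hdA
      linarith
    have hmem : (fun T => incMat ℝ n k t T ⟨A, hAk⟩) ∈ (S : Set _) := by
      by_contra hns
      exact huA (huS ⟨A, hAk⟩ hns)
    exact hmem
  have hinj : Set.InjOn
      (fun A => (fun T : {T' : Finset (Fin n) // T'.card = t} => (if T.1 ⊆ A then (1:ℝ) else 0)))
      ((Finset.univ : Finset (Fin n)).powerset.filter fun A => 0 < ν A) := by
    intro A hA B hB hAB
    simp only [Finset.coe_filter, Set.mem_setOf_eq] at hA hB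
    have hAk : A.card = k := by
      by_contra hAk
      have := hA.2
      rw [hν] at this
      simp only at this
      rw [dif_neg hAk] at this
      exact lt_irrefl 0 this
    have hBk : B.card = k := by
      by_contra hBk
      have := hB.2
      rw [hν] at this
      simp only at this
      rw [dif_neg hBk] at this
      exact lt_irrefl 0 this
    have : (⟨A, hAk⟩ : {K : Finset (Fin n) // K.card = k}) = ⟨B, hBk⟩ :=
      col_injective n k t ht (le_of_lt htk) hAB
    exact congrArg Subtype.val this
  have hle : ((Finset.univ : Finset (Fin n)).powerset.filter fun A => 0 < ν A).card ≤ S.card := by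
    apply Finset.card_le_card_of_injOn _ hmap hinj
  have h2t : 0 < 2 ^ t := Nat.pow_pos (by norm_num)
  omega

/-- The polytope `𝒫_{n,k,t}`, the convex hull of the columns of `𝒜_{n,k,t}`, is
`(2^t − 1)`-neighborly: the convex hull of any set of at most `2^t − 1` of its
vertices (columns) is a face, i.e. an extreme subset, of `𝒫_{n,k,t}`. -/
theorem stmt_7 (n k t : ℕ) (ht : 0 < t) (htk : t < k) (hkn : k ≤ n)
    (V : Set ({T : Finset (Fin n) // T.card = t} → ℝ))
    (hV : V = Set.range fun K : {K : Finset (Fin n) // K.card = k} =>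
      fun T => incMat ℝ n k t T K)
    (S : Finset ({T : Finset (Fin n) // T.card = t} → ℝ))
    (hSV : (S : Set _) ⊆ V) (hcard : S.card ≤ 2 ^ t - 1) :
    IsExtreme ℝ (convexHull ℝ V) (convexHull ℝ (S : Set _)) := by
  classical
  subst hV
  set v : {K : Finset (Fin n) // K.card = k} → ({T : Finset (Fin n) // T.card = t} → ℝ) :=
    fun K => fun T => incMat ℝ n k t T K with hv
  set S' : Finset {K : Finset (Fin n) // K.card = k} :=
    Finset.univ.filter (fun K => v K ∈ S) with hS'
  have hSimg : (S : Set _) = v '' ↑S' := by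
    ext y
    constructor
    · intro hy
      obtain ⟨K, hK⟩ := hSV hy
      refine ⟨K, ?_, hK⟩
      rw [hS']
      simp only [Finset.coe_filter, Set.mem_setOf_eq, Finset.mem_univ, true_and]
      rw [hK]
      exact hy
    · rintro ⟨K, hK, rfl⟩
      rw [hS'] at hK
      simp only [Finset.coe_filter, Set.mem_setOf_eq, Finset.mem_univ, true_and] at hK
      exact hK
  refine ⟨convexHull_mono hSV, ?_⟩
  intro x₁ hx₁ x₂ hx₂ x hx hseg
  obtain ⟨a, b, ha, hb, hab, hsum⟩ := hseg
  have hrange : (Set.range v) = v '' ↑(Finset.univ : Finset {K : Finset (Fin n) // K.card = k}) := by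
    simp
  rw [hrange] at hx₁ hx₂
  obtain ⟨w₁, hw₁0, -, hw₁1, hw₁x⟩ := (mem_convexHull_image_iff v Finset.univ x₁).mp hx₁
  obtain ⟨w₂, hw₂0, -, hw₂1, hw₂x⟩ := (mem_convexHull_image_iff v Finset.univ x₂).mp hx₂
  rw [hSimg] at hx
  obtain ⟨u, hu0, huI, hu1, hux⟩ := (mem_convexHull_image_iff v S' x).mp hx
  set w₀ : {K : Finset (Fin n) // K.card = k} → ℝ := fun K => a * w₁ K + b * w₂ K with hw₀
  have hw₀0 : ∀ K, 0 ≤ w₀ K := fun K =>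
    add_nonneg (mul_nonneg (le_of_lt ha) (hw₁0 K)) (mul_nonneg (le_of_lt hb) (hw₂0 K))
  have hw₀x : (∑ K, w₀ K • v K) = x := by
    have hsm : ∀ K, w₀ K • v K = a • (w₁ K • v K) + b • (w₂ K • v K) := by
      intro K
      rw [hw₀]
      simp only
      rw [add_smul, mul_smul, mul_smul]
    rw [Finset.sum_congr rfl (fun K _ => hsm K), Finset.sum_add_distrib,
      ← Finset.smul_sum, ← Finset.smul_sum, hw₁x, hw₂x]
    exact hsum
  have huS : ∀ K, (fun T => incMat ℝ n k t T K) ∉ (S : Set _) → u K = 0 := by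
    intro K hK
    apply huI K
    rw [hS']
    simp only [Finset.mem_filter, Finset.mem_univ, true_and]
    exact fun h => hK h
  have heq : (∑ K, u K • (fun T => incMat ℝ n k t T K))
      = ∑ K, w₀ K • (fun T => incMat ℝ n k t T K) := by
    show (∑ K, u K • v K) = ∑ K, w₀ K • v K
    rw [hux, hw₀x]
  have hkey := unique_weights n k t ht htk S hcard u w₀ hu0 hw₀0 huS heq
  have hzero : ∀ K, K ∉ S' → w₁ K = 0 ∧ w₂ K = 0 := by
    intro K hK
    have hu0K : u K = 0 := huI K hK
    have h0 : a * w₁ K + b * w₂ K = 0 := by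
      have := hkey K
      rw [hw₀] at this
      simp only at this
      rw [this, hu0K]
    have h1 := mul_nonneg (le_of_lt ha) (hw₁0 K)
    have h2 := mul_nonneg (le_of_lt hb) (hw₂0 K)
    have ha1 : a * w₁ K = 0 := by linarith
    have hb2 : b * w₂ K = 0 := by linarith
    exact ⟨by
      rcases mul_eq_zero.mp ha1 with h | h
      · exact absurd h (ne_of_gt ha)
      · exact h, by
      rcases mul_eq_zero.mp hb2 with h | h
      · exact absurd h (ne_of_gt hb)
      · exact h⟩
  · rw [hSimg]
    exact (mem_convexHull_image_iff v S' x₁).mpr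
      ⟨w₁, hw₁0, fun K hK => (hzero K hK).1, hw₁1, hw₁x⟩
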